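/- Let n ≥ 1 and let C_n be the companion matrix of θ_n. Then there exists an n×n integer matrix V with determinant a unit of ℤ (i.e. V ∈ GL(n,ℤ)) such that V² = 4·E_n + C_n, where E_n is the n×n identity matrix. -/

import Mathlib

open Finset Matrix

/-- The coefficient `c_k^{(n)} = C(n+k,2k) + 2·C(n+k,2k+1)` of `θ_n`. -/
def thetaCoeff (n k : ℕ) : ℤ := ((n + k).choose (2 * k) : ℤ) + 2 * ((n + k).choose (2 * k + 1) : ℤ)

/-- The companion matrix `C_n` of `θ_n`: 1's on the subdiagonal, last column
`(-c_0^{(n)}, …, -c_{n-1}^{(n)})ᵀ`, and 0's elsewhere. -/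
def companionTheta (n : ℕ) : Matrix (Fin n) (Fin n) ℤ :=
  Matrix.of fun i j =>
    if (j : ℕ) = n - 1 then - thetaCoeff n i
    else if (i : ℕ) = (j : ℕ) + 1 then 1 else 0

section Aux
open Polynomial
noncomputable def thetaPoly (n : ℕ) : Polynomial ℤ :=
  ∑ k ∈ Finset.range (n + 1), Polynomial.C (thetaCoeff n k) * Polynomial.X ^ k

lemma thetaCoeff_eq_zero {n k : ℕ} (h : n < k) : thetaCoeff n k = 0 := by
  unfold thetaCoeff
  rw [Nat.choose_eq_zero_of_lt (by omega), Nat.choose_eq_zero_of_lt (by omega)]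
  simp

lemma thetaPoly_coeff (n k : ℕ) : (thetaPoly n).coeff k = thetaCoeff n k := by
  unfold thetaPoly
  rw [Polynomial.finset_sum_coeff]
  simp only [Polynomial.coeff_C_mul, Polynomial.coeff_X_pow, mul_ite, mul_one, mul_zero]
  rw [Finset.sum_ite_eq (Finset.range (n+1)) k (fun j => thetaCoeff n j)]
  by_cases h : k ∈ Finset.range (n+1)
  · simp [h]
  · simp [h]
    exact (thetaCoeff_eq_zero (by simpa using h)).symm

lemma thetaPoly_natDegree_lt (n : ℕ) : (thetaPoly n).natDegree < n + 1 := by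
  have : (thetaPoly n).natDegree ≤ n := by
    apply Polynomial.natDegree_sum_le_of_forall_le
    intro i hi
    exact le_trans (Polynomial.natDegree_C_mul_X_pow_le _ _) (by simpa using Nat.lt_succ_iff.mp (Finset.mem_range.mp hi))
  omega

lemma pascal4 (a j : ℕ) : (a+2).choose (j+2) + 2*(a+2).choose (j+3) + a.choose (j+2) + 2*a.choose (j+3) = a.choose j + 2*a.choose (j+1) + 2*(a+1).choose (j+2) + 4*(a+1).choose (j+3) := by
  simp [Nat.choose_succ_succ]
  ring

lemma theta_rec (m : ℕ) : thetaPoly (m + 2) = (X + C 2) * thetaPoly (m + 1) - thetaPoly m := by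
  ext k
  simp only [Polynomial.coeff_sub, add_mul, Polynomial.coeff_add, Polynomial.coeff_C_mul,
    thetaPoly_coeff]
  cases k with
  | zero =>
    rw [Polynomial.mul_coeff_zero]
    simp only [Polynomial.coeff_X_zero, zero_mul, zero_add, thetaCoeff]
    push_cast [Nat.choose_one_right, Nat.choose_zero_right]
    ring
  | succ k =>
    rw [Polynomial.coeff_X_mul]
    rw [thetaPoly_coeff]
    unfold thetaCoeff
    have h := pascal4 (m + k + 1) (2 * k)
    push_cast
    push_cast at h
    have e1 : m + 2 + (k+1) = m + k + 1 + 2 := by ring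
    have e2 : m + 1 + (k+1) = m + k + 1 + 1 := by ring
    have e3 : m + (k+1) = m + k + 1 := by ring
    have e4 : m + 1 + k = m + k + 1 := by ring
    rw [e1, e2, e3, e4]
    have e5 : 2*(k+1) = 2*k+2 := by ring
    have e6 : 2*(k+1)+1 = 2*k+3 := by ring
    rw [e5]
    rw [show 2*k+2+1 = 2*k+3 from by ring]
    linarith [h]

lemma thetaPoly_zero : thetaPoly 0 = 1 := by
  unfold thetaPoly
  simp [thetaCoeff]

lemma thetaPoly_one : thetaPoly 1 = X + 3 := by
  unfold thetaPoly
  simp [Finset.sum_range_succ, thetaCoeff]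
  ring

lemma thetaPoly_two : thetaPoly 2 = X^2 + 5 * X + 5 := by
  unfold thetaPoly
  simp [Finset.sum_range_succ, thetaCoeff]
  norm_num [Nat.choose]
  ring

lemma theta_sq (m : ℕ) : thetaPoly (m+1) ^ 2 = X + C 4 + thetaPoly (m+2) * thetaPoly m := by
  induction m with
  | zero =>
    rw [thetaPoly_zero, thetaPoly_one, thetaPoly_two]
    have : (C 4 : Polynomial ℤ) = 4 := by norm_num
    rw [this]
    ring
  | succ k ih =>
    have e1 : k+1+1 = k+2 := by omega
    have e2 : k+1+2 = k+3 := by omega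
    have hr2 := theta_rec (k+1)
    have hr := theta_rec k
    rw [e1] at hr2 ⊢
    rw [e2] at hr2 ⊢
    linear_combination (-(thetaPoly (k+1))) * hr2 + thetaPoly (k+2) * hr + ih

lemma theta_eval_neg4 (n : ℕ) : (thetaPoly n).eval (-4) = (-1) ^ n := by
  induction n using Nat.strong_induction_on with
  | _ n ih =>
    match n with
    | 0 => rw [thetaPoly_zero]; simp
    | 1 => rw [thetaPoly_one]; norm_num
    | (m+2) =>
      rw [theta_rec m]
      simp only [Polynomial.eval_sub, Polynomial.eval_mul, Polynomial.eval_add,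
        Polynomial.eval_X, Polynomial.eval_C, ih m (by omega), ih (m+1) (by omega)]
      ring

lemma single_apply'' {n : ℕ} (k : ℕ) (hk : k < n) (i : Fin n) :
    (Pi.single (⟨k, hk⟩ : Fin n) (1:ℤ) : Fin n → ℤ) i = if (i:ℕ) = k then (1:ℤ) else 0 := by
  rcases eq_or_ne (i:ℕ) k with h | h
  · have hik : i = ⟨k, hk⟩ := Fin.ext h
    subst hik; simp
  · rw [Pi.single_eq_of_ne (fun hh => h (by rw [hh])), if_neg h]

lemma comp_mulVec_single {n : ℕ} (j : Fin n) (hj : (j:ℕ) + 1 < n) :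
    (companionTheta n) *ᵥ Pi.single j (1:ℤ) = Pi.single (⟨(j:ℕ)+1, hj⟩ : Fin n) 1 := by
  funext i
  rw [Matrix.mulVec_single_one, Matrix.col_apply, single_apply'']
  simp only [companionTheta, Matrix.of_apply, mul_one]
  rw [if_neg (by omega : (j:ℕ) ≠ n - 1)]

lemma comp_mulVec_last {n : ℕ} (hn : 0 < n) (hm : n - 1 < n) :
    (companionTheta n) *ᵥ Pi.single (⟨n-1, hm⟩ : Fin n) (1:ℤ)
      = fun i : Fin n => - thetaCoeff n (i:ℕ) := by
  funext i
  rw [Matrix.mulVec_single]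
  simp [companionTheta]

lemma comp_pow_mulVec {n : ℕ} (hn : 0 < n) (k : ℕ) (hk : k < n) :
    (companionTheta n ^ k) *ᵥ Pi.single (⟨0, hn⟩ : Fin n) (1:ℤ) = Pi.single (⟨k, hk⟩ : Fin n) 1 := by
  induction k with
  | zero => rw [pow_zero, Matrix.one_mulVec]
  | succ k ih =>
    rw [pow_succ', ← Matrix.mulVec_mulVec, ih (by omega),
      comp_mulVec_single (⟨k, by omega⟩ : Fin n) hk]

lemma thetaCoeff_self (n : ℕ) : thetaCoeff n n = 1 := by
  unfold thetaCoeff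
  rw [show 2 * n = n + n from by ring, Nat.choose_self,
    Nat.choose_eq_zero_of_lt (by omega)]
  simp

lemma aeval_theta_comp (n : ℕ) (hn : 0 < n) :
    Polynomial.aeval (companionTheta n) (thetaPoly n) = 0 := by
  set Cn := companionTheta n with hCn
  set A := Polynomial.aeval Cn (thetaPoly n) with hA
  have hsum : A = ∑ k ∈ Finset.range (n+1), thetaCoeff n k • Cn ^ k := by
    rw [hA, Polynomial.aeval_eq_sum_range' (thetaPoly_natDegree_lt n)]
    simp [thetaPoly_coeff]
  have hpow : Cn ^ n *ᵥ Pi.single (⟨0, hn⟩ : Fin n) (1:ℤ)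
      = fun i : Fin n => - thetaCoeff n (i:ℕ) := by
    have e : Cn ^ n = Cn * Cn ^ (n-1) := by
      rw [← pow_succ']
      congr 1
      omega
    rw [e, ← Matrix.mulVec_mulVec, comp_pow_mulVec hn (n-1) (by omega),
      comp_mulVec_last hn (by omega)]
  have h0 : A *ᵥ Pi.single (⟨0, hn⟩ : Fin n) (1:ℤ) = 0 := by
    rw [hsum]
    rw [show (∑ k ∈ Finset.range (n+1), thetaCoeff n k • Cn ^ k) *ᵥ Pi.single (⟨0, hn⟩ : Fin n) (1:ℤ)
        = ∑ k ∈ Finset.range (n+1), (thetaCoeff n k • Cn ^ k) *ᵥ Pi.single (⟨0, hn⟩ : Fin n) (1:ℤ)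
      from map_sum (Matrix.mulVec.addMonoidHomLeft (Pi.single (⟨0, hn⟩ : Fin n) (1:ℤ))) _ _]
    rw [Finset.sum_range_succ, thetaCoeff_self, one_smul, hpow]
    funext i
    simp only [Pi.add_apply, Finset.sum_apply, Pi.zero_apply]
    have hterm : ∀ k ∈ Finset.range n,
        ((thetaCoeff n k • Cn ^ k) *ᵥ Pi.single (⟨0, hn⟩ : Fin n) (1:ℤ)) i
        = if (i:ℕ) = k then thetaCoeff n k else 0 := by
      intro k hk
      rw [Matrix.smul_mulVec, comp_pow_mulVec hn k (Finset.mem_range.mp hk)]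
      simp only [Pi.smul_apply, single_apply'', smul_eq_mul, mul_ite, mul_one, mul_zero]
    rw [Finset.sum_congr rfl hterm, Finset.sum_ite_eq (Finset.range n) (i:ℕ)
      (fun k => thetaCoeff n k)]
    simp [i.isLt]
  have hcol : ∀ j : Fin n, A *ᵥ Pi.single j (1:ℤ) = 0 := by
    intro j
    have hej : (Pi.single j (1:ℤ) : Fin n → ℤ) = (Cn ^ (j:ℕ)) *ᵥ Pi.single (⟨0, hn⟩ : Fin n) 1 := by
      rw [comp_pow_mulVec hn (j:ℕ) j.isLt]
    have haev : Cn ^ (j:ℕ) = Polynomial.aeval Cn ((Polynomial.X : Polynomial ℤ) ^ (j:ℕ)) := by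
      rw [_root_.map_pow, Polynomial.aeval_X]
    have hcomm : A * Cn ^ (j:ℕ) = Cn ^ (j:ℕ) * A := by
      rw [hA, haev, ← _root_.map_mul, ← _root_.map_mul, mul_comm]
    rw [hej, Matrix.mulVec_mulVec, hcomm, ← Matrix.mulVec_mulVec, h0, Matrix.mulVec_zero]
  ext i j
  have hc := congrFun (hcol j) i
  rw [Matrix.mulVec_single] at hc
  simpa using hc

theorem stmt_5 (n : ℕ) (hn : 1 ≤ n) :
    ∃ V : Matrix (Fin n) (Fin n) ℤ, IsUnit V.det ∧
      V ^ 2 = (4 : ℤ) • (1 : Matrix (Fin n) (Fin n) ℤ) + companionTheta n := by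
  have h41 : ∀ m : ℕ, (4 : ℤ) • (1 : Matrix (Fin m) (Fin m) ℤ) = (4 : Matrix (Fin m) (Fin m) ℤ) := by
    intro m
    simp
  obtain ⟨m, rfl⟩ : ∃ m, n = m + 1 := ⟨n - 1, by omega⟩
  cases m with
  | zero =>
    refine ⟨1, by simp, ?_⟩
    ext i j
    fin_cases i; fin_cases j
    simp only [one_pow, Matrix.add_apply, Matrix.smul_apply, Matrix.one_apply_eq,
      companionTheta, Matrix.of_apply, thetaCoeff]
    norm_num [Nat.choose]
  | succ l =>
    have hn2 : 0 < l + 1 + 1 := by omega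
    set N := l + 1 + 1 with hN
    set Cn := companionTheta N with hCn
    have hz : Polynomial.aeval Cn (thetaPoly N) = 0 := aeval_theta_comp N hn2
    set V := Polynomial.aeval Cn (thetaPoly (l + 1)) with hV
    have hsq : V ^ 2 = (4 : ℤ) • (1 : Matrix (Fin N) (Fin N) ℤ) + Cn := by
      rw [hV, ← map_pow, show l + 1 = l + 1 from rfl, theta_sq l,
        show l + 2 = N from by omega]
      rw [map_add, map_add, _root_.map_mul, hz, zero_mul, add_zero,
        Polynomial.aeval_X, Polynomial.aeval_C, h41]
      rw [show (algebraMap ℤ (Matrix (Fin N) (Fin N) ℤ)) 4 = (4 : Matrix (Fin N) (Fin N) ℤ) from by simp]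
      exact add_comm _ _
    refine ⟨V, ?_, hsq⟩
    -- invertibility
    set s := thetaPoly N /ₘ (Polynomial.X - Polynomial.C (-4)) with hs
    have hdiv := Polynomial.modByMonic_add_div (thetaPoly N) (Polynomial.X - Polynomial.C (-4 : ℤ))
    rw [Polynomial.modByMonic_X_sub_C_eq_C_eval, theta_eval_neg4] at hdiv
    have h2 := congrArg (Polynomial.aeval Cn) hdiv
    rw [hz, map_add, _root_.map_mul, map_sub, Polynomial.aeval_X, Polynomial.aeval_C,
      Polynomial.aeval_C] at h2
    set S := Polynomial.aeval Cn s with hS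
    -- h2 : algebraMap _ _ ((-1)^N) + (Cn - algebraMap _ _ (-4)) * S = 0
    have halg : ∀ z : ℤ, algebraMap ℤ (Matrix (Fin N) (Fin N) ℤ) z = (z : Matrix (Fin N) (Fin N) ℤ) := by
      intro z; simp
    rw [halg, halg] at h2
    have hV2 : V ^ 2 = Cn - ((-4 : ℤ) : Matrix (Fin N) (Fin N) ℤ) := by
      rw [hsq, h41]
      rw [Int.cast_neg, sub_neg_eq_add]
      push_cast
      exact add_comm _ _
    have hkey : V ^ 2 * (S * ((-((-1:ℤ)^N) : ℤ) : Matrix (Fin N) (Fin N) ℤ)) = 1 := by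
      rw [hV2, ← mul_assoc]
      have hCS : (Cn - ((-4 : ℤ) : Matrix (Fin N) (Fin N) ℤ)) * S = -(((-1:ℤ)^N : ℤ) : Matrix (Fin N) (Fin N) ℤ) := by
        exact eq_neg_of_add_eq_zero_right h2
      rw [hCS]
      rw [← Int.cast_neg, ← Int.cast_mul]
      rw [show -(-1:ℤ)^N * -(-1:ℤ)^N = 1 from by
        rw [neg_mul_neg, ← pow_add]
        exact Even.neg_one_pow ⟨N, rfl⟩]
      exact Int.cast_one
    have hdet := congrArg Matrix.det hkey
    rw [Matrix.det_mul, Matrix.det_one, pow_two, Matrix.det_mul] at hdet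
    exact IsUnit.of_mul_eq_one (V.det * (S * ((-((-1:ℤ)^N) : ℤ) : Matrix (Fin N) (Fin N) ℤ)).det) (by linear_combination hdet)
end Aux
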